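/- Let M be a module over a commutative ring R and t₁,…,t_k a sequence of elements that forms a regular sequence on M in every order (e.g. M is t-regular with respect to the divisor with components t_i). Then ⋂_{i=1}^k t_iM = (t₁t₂⋯t_k)M. -/
import Mathlib

open Submodule RingTheory.Sequence

section Aux

variable {R : Type*} [CommRing R] {M : Type*} [AddCommGroup M] [Module R M]

open scoped Pointwise

private lemma aux_le (k : ℕ) (t : Fin k → R)
    (hreg : ∀ σ : Equiv.Perm (Fin k),
        RingTheory.Sequence.IsWeaklyRegular M (List.ofFn (t ∘ σ))) :
    (⨅ i : Fin k, LinearMap.range (LinearMap.lsmul R M (t i))) ≤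
      LinearMap.range (LinearMap.lsmul R M (∏ i, t i)) := by
  induction k with
  | zero =>
      intro x _
      exact ⟨x, by simp⟩
  | succ k ih =>
      -- the shorter sequence is regular in every order
      have hreg' : ∀ σ : Equiv.Perm (Fin k),
          RingTheory.Sequence.IsWeaklyRegular M
            (List.ofFn ((t ∘ Fin.castSucc) ∘ σ)) := by
        intro σ
        have h := hreg (finSuccEquivLast.symm.permCongr σ.optionCongr)
        have hl : List.ofFn (t ∘ (finSuccEquivLast.symm.permCongr σ.optionCongr)) =
            List.ofFn ((t ∘ Fin.castSucc) ∘ σ) ++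
              [t ((finSuccEquivLast.symm.permCongr σ.optionCongr) (Fin.last k))] := by
          rw [List.ofFn_succ' (t ∘ (finSuccEquivLast.symm.permCongr σ.optionCongr))]
          simp only [List.concat_eq_append, Function.comp_apply]
          congr 1
          apply congrArg
          funext i
          simp [Equiv.permCongr_apply]
        rw [hl, isWeaklyRegular_append_iff] at h
        exact h.1
      intro x hx
      rw [Submodule.mem_iInf] at hx
      obtain ⟨m, hm⟩ := ih (t ∘ Fin.castSucc) hreg'
        (Submodule.mem_iInf _ |>.mpr fun i => hx i.castSucc)
      obtain ⟨n, hn⟩ := hx (Fin.last k)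
      simp only [LinearMap.lsmul_apply, Function.comp_apply] at hm hn
      -- the product of the first `k` elements is regular on `M ⧸ t_last M`
      have hp : IsSMulRegular (QuotSMulTop (t (Fin.last k)) M)
          (∏ i : Fin k, t i.castSucc) := by
        refine Finset.prod_induction _ _ (fun u v hu hv => hu.mul hv)
          (IsSMulRegular.one _) (fun i _ => ?_)
        obtain ⟨m', rfl⟩ : ∃ m', k = m' + 1 :=
          ⟨k - 1, (Nat.succ_pred_eq_of_pos i.pos).symm⟩
        have hAB : (Fin.castSucc i : Fin (m' + 2)) ≠ Fin.last (m' + 1) :=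
          (Fin.castSucc_lt_last i).ne
        set τ : Equiv.Perm (Fin (m' + 2)) := Equiv.swap 0 (Fin.last (m' + 1)) with hτ
        set σ : Equiv.Perm (Fin (m' + 2)) := (Equiv.swap 1 (τ i.castSucc)).trans τ
          with hσ
        have hτB : τ i.castSucc ≠ 0 := fun h => hAB (by
          have h2 := congrArg τ h
          rwa [hτ, Equiv.swap_apply_self, Equiv.swap_apply_left] at h2)
        have h01 : (0 : Fin (m' + 2)) ≠ 1 := by simp [Fin.ext_iff]
        have hσ0 : σ 0 = Fin.last (m' + 1) := by
          rw [hσ, Equiv.trans_apply,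
            Equiv.swap_apply_of_ne_of_ne h01 (Ne.symm hτB), hτ,
            Equiv.swap_apply_left]
        have hσ1 : σ 1 = i.castSucc := by
          rw [hσ, Equiv.trans_apply, Equiv.swap_apply_left, hτ,
            Equiv.swap_apply_self]
        have h := hreg σ
        have hl : List.ofFn (t ∘ σ) =
            t (Fin.last (m' + 1)) :: t i.castSucc ::
              List.ofFn (fun j : Fin m' => t (σ j.succ.succ)) := by
          rw [List.ofFn_succ, List.ofFn_succ]
          simp only [Function.comp_apply, Fin.succ_zero_eq_one, hσ0, hσ1]
        rw [hl, isWeaklyRegular_cons_iff, isWeaklyRegular_cons_iff] at h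
        exact h.2.1
      -- conclude: p • m = t_last • n, so m ∈ t_last M
      have hq : (∏ j : Fin k, t j.castSucc) •
            (Submodule.Quotient.mk m : QuotSMulTop (t (Fin.last k)) M)
          = (∏ j : Fin k, t j.castSucc) •
            (0 : QuotSMulTop (t (Fin.last k)) M) := by
        rw [smul_zero, ← Submodule.Quotient.mk_smul, hm, ← hn,
          Submodule.Quotient.mk_eq_zero]
        exact Submodule.smul_mem_pointwise_smul n _ ⊤ trivial
      have hmk := hp hq
      rw [Submodule.Quotient.mk_eq_zero] at hmk
      have hmk' : m ∈ ((t (Fin.last k) • (⊤ : Submodule R M) :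
          Submodule R M) : Set M) := hmk
      rw [Submodule.coe_pointwise_smul] at hmk'
      obtain ⟨u, -, hu⟩ := hmk'
      change t (Fin.last k) • u = m at hu
      exact ⟨u, by
        rw [LinearMap.lsmul_apply, Fin.prod_univ_castSucc, mul_smul, hu, hm]⟩

end Aux

/-- Let `M` be a module over a commutative ring `R` and `t₁, …, t_k` a
sequence of elements that forms a regular sequence on `M` in every order.  Then
`⋂_{i=1}^k t_iM = (t₁t₂⋯t_k)M`. -/
theorem stmt_7 {R : Type*} [CommRing R] {M : Type*} [AddCommGroup M] [Module R M]
    (k : ℕ) (t : Fin k → R)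
    -- the sequence is `M`-regular in every order
    (hreg : ∀ σ : Equiv.Perm (Fin k),
        RingTheory.Sequence.IsWeaklyRegular M (List.ofFn (t ∘ σ))) :
    (⨅ i : Fin k, LinearMap.range (LinearMap.lsmul R M (t i))) =
      LinearMap.range (LinearMap.lsmul R M (∏ i, t i)) := by
  refine le_antisymm (aux_le k t hreg) ?_
  rw [le_iInf_iff]
  intro i
  rintro x ⟨m, rfl⟩
  refine ⟨(∏ j ∈ Finset.univ.erase i, t j) • m, ?_⟩
  simp only [LinearMap.lsmul_apply, ← mul_smul]
  rw [← Finset.mul_prod_erase _ _ (Finset.mem_univ i)]
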